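/- Let T > 0, r ≥ 1, α ∈ (0,1), β ∈ (0,1/2), set σ := min{3/2−α−β, 1}, and let κ ∈ {1/2−β, σ}. Then there exists a constant C > 0, independent of N and n, such that for every integer N ≥ 1 and every n ∈ {1,…,N}, ∫_{t₁}^{t_n} (t_n − s)^{−α}·ŝ^{β−1/2}·(s − ŝ)^{σ} ds ≤ C·t_n^{1/2−α+β+σ−κ/r}·N^{−κ}, where ŝ is the left graded-mesh point of s. -/

import Mathlib

set_option maxHeartbeats 1000000

open MeasureTheory intervalIntegral Set

/-- The graded mesh point `t_n = T * (n/N)^r`. -/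
noncomputable def gmesh (T r : ℝ) (N n : ℕ) : ℝ := T * ((n : ℝ) / (N : ℝ)) ^ r

lemma beta_integrable {α γ : ℝ} (hα : α < 1) (hγ : -1 < γ) {t : ℝ} (ht : 0 < t) :
    IntervalIntegrable (fun s => (t - s) ^ (-α) * s ^ γ) volume 0 t := by
  have h1 : IntervalIntegrable (fun s => (t - s) ^ (-α) * s ^ γ) volume 0 (t/2) := by
    apply IntervalIntegrable.continuousOn_mul (intervalIntegrable_rpow' hγ)
    apply ContinuousOn.rpow_const
    · exact (continuous_const.sub continuous_id).continuousOn
    · intro x hx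
      left
      rw [Set.uIcc_of_le (by linarith)] at hx
      have := hx.2
      intro h
      nlinarith [hx.1, hx.2]
  have h2 : IntervalIntegrable (fun s => (t - s) ^ (-α) * s ^ γ) volume (t/2) t := by
    apply IntervalIntegrable.mul_continuousOn
    · have : IntervalIntegrable (fun s : ℝ => s ^ (-α)) volume (t - t/2) (t - t) :=
        intervalIntegrable_rpow' (by linarith)
      simpa using this.comp_sub_left t
    · apply ContinuousOn.rpow_const continuousOn_id
      intro x hx
      left
      rw [Set.uIcc_of_le (by linarith)] at hx
      intro h; simp only [id_eq] at h; nlinarith [hx.1, hx.2]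
  exact h1.trans h2

lemma beta_value {α γ : ℝ} (t : ℝ) (ht : 0 < t) :
    ∫ s in (0:ℝ)..t, (t - s) ^ (-α) * s ^ γ
      = t ^ (1 - α + γ) * ∫ u in (0:ℝ)..1, (1 - u) ^ (-α) * u ^ γ := by
  have hc : t ≠ 0 := ht.ne'
  have := intervalIntegral.integral_comp_mul_left
    (a := (0:ℝ)) (b := 1) (fun s => (t - s) ^ (-α) * s ^ γ) hc
  simp only [mul_zero, mul_one, smul_eq_mul] at this
  rw [show (∫ s in (0:ℝ)..t, (t - s) ^ (-α) * s ^ γ)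
      = t * ∫ u in (0:ℝ)..1, (t - t * u) ^ (-α) * (t * u) ^ γ by
    rw [this]; field_simp]
  have hcong : ∫ u in (0:ℝ)..1, (t - t * u) ^ (-α) * (t * u) ^ γ
      = ∫ u in (0:ℝ)..1, t ^ (-α + γ) * ((1 - u) ^ (-α) * u ^ γ) := by
    apply intervalIntegral.integral_congr
    intro u hu
    rw [Set.uIcc_of_le (by norm_num)] at hu
    have h0 : (0:ℝ) ≤ u := hu.1
    have h1 : u ≤ 1 := hu.2
    show (t - t * u) ^ (-α) * (t * u) ^ γ = t ^ (-α + γ) * ((1 - u) ^ (-α) * u ^ γ)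
    have hh : t - t * u = t * (1 - u) := by ring
    rw [hh, Real.mul_rpow ht.le (by linarith), Real.mul_rpow ht.le h0,
      Real.rpow_add ht]
    ring
  rw [hcong, intervalIntegral.integral_const_mul, ← mul_assoc,
    show (1:ℝ) - α + γ = 1 + (-α + γ) by ring]
  have he : t ^ (1 + (-α + γ)) = t * (t ^ (-α) * t ^ γ) := by
    rw [Real.rpow_add ht, Real.rpow_add ht, Real.rpow_one]
  rw [he, Real.rpow_add ht]

lemma rpow_sub_rpow_le' {a b r : ℝ} (hb : 0 ≤ b) (hba : b ≤ a) (hr : 1 ≤ r) :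
    a ^ r - b ^ r ≤ r * a ^ (r - 1) * (a - b) := by
  have ha : 0 ≤ a := hb.trans hba
  rcases eq_or_lt_of_le ha with h | ha
  · obtain rfl : a = 0 := h.symm
    obtain rfl : b = 0 := le_antisymm hba hb
    simp
  have hs : (-1:ℝ) ≤ b / a - 1 := by
    have : 0 ≤ b / a := div_nonneg hb ha.le
    linarith
  have hber := one_add_mul_self_le_rpow_one_add hs hr
  rw [show (1:ℝ) + (b / a - 1) = b / a by ring, Real.div_rpow hb ha.le] at hber
  have hapos : 0 < a ^ r := Real.rpow_pos_of_pos ha r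
  have key : a ^ r * (1 + r * (b / a - 1)) ≤ b ^ r := by
    rw [mul_comm]
    exact (le_div_iff₀ hapos).mp hber
  have har : a ^ (r - 1) = a ^ r / a := Real.rpow_sub_one ha.ne' r
  have heq : a ^ r * (1 + r * (b / a - 1)) = a ^ r - r * (a ^ r / a) * (a - b) := by
    field_simp
    ring
  rw [har]
  linarith [heq ▸ key]

section mesh
variable {T r : ℝ} {N : ℕ}

lemma gmesh_nonneg (hT : 0 ≤ T) (n : ℕ) : 0 ≤ gmesh T r N n :=
  mul_nonneg hT (Real.rpow_nonneg (div_nonneg (Nat.cast_nonneg n) (Nat.cast_nonneg N)) r)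

lemma gmesh_pos (hT : 0 < T) (hN : 1 ≤ N) {n : ℕ} (hn : 1 ≤ n) : 0 < gmesh T r N n := by
  have hN0 : (0:ℝ) < N := by exact_mod_cast hN
  have hn0 : (0:ℝ) < n := by exact_mod_cast hn
  exact mul_pos hT (Real.rpow_pos_of_pos (div_pos hn0 hN0) r)

lemma gmesh_mono (hT : 0 ≤ T) (hr : 0 ≤ r) {m n : ℕ} (hmn : m ≤ n) :
    gmesh T r N m ≤ gmesh T r N n := by
  apply mul_le_mul_of_nonneg_left _ hT
  apply Real.rpow_le_rpow (div_nonneg (Nat.cast_nonneg m) (Nat.cast_nonneg N)) _ hr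
  gcongr

lemma gmesh_succ_le (hT : 0 ≤ T) (hr : 0 ≤ r) (hN : 1 ≤ N) {i : ℕ} (hi : 1 ≤ i) :
    gmesh T r N (i + 1) ≤ 2 ^ r * gmesh T r N i := by
  have hN0 : (0:ℝ) < N := by exact_mod_cast hN
  have hi1 : (1:ℝ) ≤ (i:ℝ) := by exact_mod_cast hi
  have h1 : ((i+1:ℕ):ℝ) / N ≤ 2 * ((i:ℝ) / N) := by
    rw [← mul_div_assoc]
    apply (div_le_div_iff_of_pos_right hN0).mpr
    push_cast; linarith
  calc gmesh T r N (i+1) = T * (((i+1:ℕ):ℝ)/N) ^ r := rfl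
    _ ≤ T * (2 * ((i:ℝ)/N)) ^ r := by
        exact mul_le_mul_of_nonneg_left
          (Real.rpow_le_rpow (div_nonneg (Nat.cast_nonneg _) hN0.le) h1 hr) hT
    _ = 2 ^ r * gmesh T r N i := by
        rw [Real.mul_rpow (by norm_num) (div_nonneg (Nat.cast_nonneg i) hN0.le)]
        unfold gmesh; ring

lemma gmesh_step (hT : 0 < T) (hr : 1 ≤ r) (hN : 1 ≤ N) (i : ℕ) :
    gmesh T r N (i + 1) - gmesh T r N i
      ≤ r * T ^ (1/r) * (gmesh T r N (i + 1)) ^ (1 - 1/r) / N := by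
  have hN0 : (0:ℝ) < N := by exact_mod_cast hN
  have hr0 : (0:ℝ) < r := by linarith
  set a : ℝ := ((i:ℝ) + 1) / N with ha
  set b : ℝ := (i:ℝ) / N with hb
  have hb0 : 0 ≤ b := div_nonneg (Nat.cast_nonneg i) hN0.le
  have hba : b ≤ a := by rw [ha, hb]; gcongr; linarith
  have h1 : gmesh T r N (i+1) - gmesh T r N i = T * (a ^ r - b ^ r) := by
    unfold gmesh; push_cast; ring
  have h2 := rpow_sub_rpow_le' hb0 hba hr
  have hab : a - b = 1 / N := by rw [ha, hb]; field_simp; ring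
  have h3 : gmesh T r N (i+1) - gmesh T r N i ≤ T * (r * a ^ (r-1) / N) := by
    rw [h1]
    calc T * (a ^ r - b ^ r) ≤ T * (r * a ^ (r-1) * (a - b)) := by
          apply mul_le_mul_of_nonneg_left h2 hT.le
      _ = T * (r * a ^ (r-1) / N) := by rw [hab]; ring
  refine h3.trans (le_of_eq ?_)
  have ha0 : 0 ≤ a := hb0.trans hba
  have key : T * a ^ (r - 1) = T ^ (1/r) * (gmesh T r N (i+1)) ^ (1 - 1/r) := by
    have e1 : (gmesh T r N (i+1)) ^ (1 - 1/r) = T ^ (1 - 1/r) * (a ^ r) ^ (1 - 1/r) := by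
      unfold gmesh
      push_cast
      rw [Real.mul_rpow hT.le (Real.rpow_nonneg ha0 r)]
    have e2 : (a ^ r) ^ (1 - 1/r) = a ^ (r - 1) := by
      rw [← Real.rpow_mul ha0]
      congr 1
      field_simp
    rw [e1, e2, ← mul_assoc, ← Real.rpow_add hT]
    have h5 : 1/r + (1 - 1/r) = 1 := by ring
    rw [h5, Real.rpow_one]
  rw [div_eq_mul_inv, div_eq_mul_inv,
    show T * (r * a ^ (r-1) * ((N:ℝ))⁻¹) = (T * a ^ (r-1)) * r * ((N:ℝ))⁻¹ by ring, key]
  ring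
end mesh

/-- Bound with weight singularity on the graded mesh (equation `eq.kappa`). -/
theorem stmt12 (T r α β : ℝ) (hT : 0 < T) (hr : 1 ≤ r)
    (hα : α ∈ Set.Ioo (0:ℝ) 1) (hβ : β ∈ Set.Ioo (0:ℝ) (1/2))
    (σ : ℝ) (hσ : σ = min (3/2 - α - β) 1)
    (κ : ℝ) (hκ : κ = 1/2 - β ∨ κ = σ) :
    ∃ C > (0:ℝ), ∀ N : ℕ, 1 ≤ N → ∀ hat : ℝ → ℝ,
      (∀ i : ℕ, i < N →
        ∀ s ∈ Set.Ico (gmesh T r N i) (gmesh T r N (i + 1)), hat s = gmesh T r N i) →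
      ∀ n : ℕ, 1 ≤ n → n ≤ N →
        (∫ s in (gmesh T r N 1)..(gmesh T r N n),
            (gmesh T r N n - s) ^ (-α) * (hat s) ^ (β - 1/2) * (s - hat s) ^ σ)
          ≤ C * (gmesh T r N n) ^ (1/2 - α + β + σ - κ / r) * (N : ℝ) ^ (-κ) := by
  obtain ⟨hα0, hα1⟩ := hα
  obtain ⟨hβ0, hβ1⟩ := hβ
  have hr0 : (0:ℝ) < r := by linarith
  have hσ1 : σ ≤ 1 := by rw [hσ]; exact min_le_right _ _
  have hσ2 : σ ≤ 3/2 - α - β := by rw [hσ]; exact min_le_left _ _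
  have hσpos : 0 < σ := by rw [hσ]; exact lt_min (by linarith) one_pos
  have hκσ : κ ≤ σ := by
    rcases hκ with h | h
    · rw [h, hσ]; exact le_min (by linarith) (by linarith)
    · rw [h]
  have hκpos : 0 < κ := by
    rcases hκ with h | h
    · rw [h]; linarith
    · rw [h]; exact hσpos
  have hκr : κ / r ≤ κ := div_le_self hκpos.le hr
  set γ := β - 1/2 + σ - κ / r with hγdef
  have hγ : -1 < γ := by rw [hγdef]; linarith
  set B := ∫ u in (0:ℝ)..1, (1 - u) ^ (-α) * u ^ γ with hBdef
  have hB0 : 0 ≤ B := by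
    apply intervalIntegral.integral_nonneg (by norm_num)
    intro u hu
    exact mul_nonneg (Real.rpow_nonneg (by linarith [hu.2]) _) (Real.rpow_nonneg hu.1 _)
  set K₁ : ℝ := r * 2 ^ (r - 1) * T ^ (1/r) with hK₁
  have hK₁pos : 0 < K₁ := by
    apply mul_pos (mul_pos hr0 (Real.rpow_pos_of_pos two_pos _)) (Real.rpow_pos_of_pos hT _)
  set K₂ : ℝ := 2 ^ (r * (1/2 - β)) * K₁ ^ κ with hK₂
  have hK₂pos : 0 < K₂ :=
    mul_pos (Real.rpow_pos_of_pos two_pos _) (Real.rpow_pos_of_pos hK₁pos _)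
  refine ⟨K₂ * B + 1, by positivity, ?_⟩
  intro N hN hat hhat n hn hnN
  have hNpos : (0:ℝ) < N := by exact_mod_cast hN
  set t : ℕ → ℝ := gmesh T r N with ht
  have htnpos : 0 < t n := gmesh_pos hT hN hn
  have ht1tn : t 1 ≤ t n := gmesh_mono hT.le hr0.le hn
  have ht1pos : 0 < t 1 := gmesh_pos hT hN le_rfl
  have hNκ : 0 ≤ (N:ℝ) ^ (-κ) := Real.rpow_nonneg hNpos.le _
  have htne : 0 ≤ (t n) ^ (1/2 - α + β + σ - κ/r) := Real.rpow_nonneg htnpos.le _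
  by_cases hint : IntervalIntegrable
      (fun s => (t n - s) ^ (-α) * (hat s) ^ (β - 1/2) * (s - hat s) ^ σ) volume (t 1) (t n)
  case neg =>
    rw [intervalIntegral.integral_undef hint]
    have : (0:ℝ) < K₂ * B + 1 := by positivity
    exact mul_nonneg (mul_nonneg this.le htne) hNκ
  case pos =>
  classical
  have key : ∀ s ∈ Set.Ico (t 1) (t n),
      (t n - s) ^ (-α) * (hat s) ^ (β - 1/2) * (s - hat s) ^ σ
        ≤ K₂ * (N:ℝ) ^ (-κ) * ((t n - s) ^ (-α) * s ^ γ) := by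
    intro s hs
    obtain ⟨hs1, hs2⟩ := hs
    have hspos : 0 < s := lt_of_lt_of_le ht1pos hs1
    set P : ℕ → Prop := fun j => t j ≤ s with hP
    have hP1 : P 1 := hs1
    set i := Nat.findGreatest P n with hi
    have hi1 : 1 ≤ i := Nat.le_findGreatest hn hP1
    have hilen : i ≤ n := Nat.findGreatest_le n
    have hPi : P i := Nat.findGreatest_spec hn hP1
    have hiltn : i < n := by
      rcases lt_or_eq_of_le hilen with h | h
      · exact h
      · exfalso; rw [h] at hPi; exact absurd hPi (not_le.mpr hs2)
    have hnot : ¬ P (i + 1) := by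
      apply Nat.findGreatest_is_greatest (n := n)
      · rw [← hi]; omega
      · omega
    have hsi2 : s < t (i + 1) := not_le.mp hnot
    have hiN : i < N := lt_of_lt_of_le hiltn hnN
    have hhs : hat s = t i := hhat i hiN s ⟨hPi, hsi2⟩
    have htipos : 0 < t i := gmesh_pos hT hN hi1
    have hsucc : t (i + 1) ≤ 2 ^ r * t i := gmesh_succ_le hT.le hr0.le hN hi1
    have h2r : (0:ℝ) < 2 ^ r := Real.rpow_pos_of_pos two_pos r
    have hti_lb : 2 ^ (-r) * s ≤ t i := by
      have hle : s ≤ 2 ^ r * t i := le_trans hsi2.le hsucc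
      rw [Real.rpow_neg (by norm_num)]
      exact (inv_mul_le_iff₀ h2r).mpr hle
    have hhatbd : (t i) ^ (β - 1/2) ≤ 2 ^ (r * (1/2 - β)) * s ^ (β - 1/2) := by
      have h1 := Real.rpow_le_rpow_of_nonpos
        (mul_pos (Real.rpow_pos_of_pos two_pos _) hspos) hti_lb
        (by linarith : β - 1/2 ≤ 0)
      rw [Real.mul_rpow (Real.rpow_nonneg (by norm_num) _) hspos.le,
        ← Real.rpow_mul (by norm_num : (0:ℝ) ≤ 2)] at h1
      have he : (-r) * (β - 1/2) = r * (1/2 - β) := by ring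
      rwa [he] at h1
    have hstep : s - t i ≤ K₁ * s ^ (1 - 1/r) / N := by
      have h1 : s - t i ≤ t (i+1) - t i := by linarith [hsi2.le]
      have h2 := gmesh_step hT hr hN i
      have h3 : t (i+1) ≤ 2 ^ r * s := by
        refine le_trans hsucc ?_
        have := hPi
        nlinarith
      have h4 : (t (i+1)) ^ (1 - 1/r) ≤ ((2:ℝ) ^ r * s) ^ (1 - 1/r) := by
        apply Real.rpow_le_rpow (gmesh_nonneg hT.le _) h3
        have : 1/r ≤ 1 := by
          rw [div_le_one hr0]; exact hr
        linarith
      have h5 : ((2:ℝ) ^ r * s) ^ (1 - 1/r) = 2 ^ (r - 1) * s ^ (1 - 1/r) := by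
        rw [Real.mul_rpow h2r.le hspos.le, ← Real.rpow_mul (by norm_num : (0:ℝ) ≤ 2)]
        have : r * (1 - 1/r) = r - 1 := by field_simp
        rw [this]
      calc s - t i ≤ t (i+1) - t i := h1
        _ ≤ r * T ^ (1/r) * (t (i+1)) ^ (1 - 1/r) / N := h2
        _ ≤ r * T ^ (1/r) * (2 ^ (r-1) * s ^ (1 - 1/r)) / N := by
            rw [← h5]
            apply div_le_div_of_nonneg_right _ hNpos.le
            · exact mul_le_mul_of_nonneg_left h4
                (mul_nonneg hr0.le (Real.rpow_nonneg hT.le _))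
        _ = K₁ * s ^ (1 - 1/r) / N := by rw [hK₁]; ring
    have hsub0 : 0 ≤ s - t i := sub_nonneg.mpr hPi
    have hstep' : s - t i ≤ s := sub_le_self _ htipos.le
    have hsig : (s - t i) ^ σ ≤ s ^ (σ - κ) * (K₁ * s ^ (1 - 1/r) / N) ^ κ := by
      have e : (s - t i) ^ σ = (s - t i) ^ (σ - κ) * (s - t i) ^ κ := by
        rw [← Real.rpow_add' hsub0 (by intro h; exact hσpos.ne' (by linarith) : σ - κ + κ ≠ 0)]
        congr 1
        ring
      rw [e]
      exact mul_le_mul (Real.rpow_le_rpow hsub0 hstep' (by linarith))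
        (Real.rpow_le_rpow hsub0 hstep hκpos.le)
        (Real.rpow_nonneg hsub0 _) (Real.rpow_nonneg hspos.le _)
    have hexp : (K₁ * s ^ (1 - 1/r) / N) ^ κ
        = K₁ ^ κ * s ^ ((1 - 1/r) * κ) * (N:ℝ) ^ (-κ) := by
      rw [Real.div_rpow (mul_nonneg hK₁pos.le (Real.rpow_nonneg hspos.le _)) hNpos.le,
        Real.mul_rpow hK₁pos.le (Real.rpow_nonneg hspos.le _),
        ← Real.rpow_mul hspos.le, Real.rpow_neg hNpos.le, div_eq_mul_inv]
    have hspow : s ^ (β - 1/2) * s ^ (σ - κ) * s ^ ((1 - 1/r) * κ) = s ^ γ := by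
      rw [← Real.rpow_add hspos, ← Real.rpow_add hspos]
      congr 1
      rw [hγdef]
      field_simp
      try ring
    have hA : 0 ≤ (t n - s) ^ (-α) := Real.rpow_nonneg (by linarith : (0:ℝ) ≤ t n - s) _
    calc (t n - s) ^ (-α) * (hat s) ^ (β - 1/2) * (s - hat s) ^ σ
        = (t n - s) ^ (-α) * (t i) ^ (β - 1/2) * (s - t i) ^ σ := by rw [hhs]
      _ ≤ ((t n - s) ^ (-α) * (2 ^ (r * (1/2 - β)) * s ^ (β - 1/2)))
            * (s ^ (σ - κ) * (K₁ * s ^ (1 - 1/r) / N) ^ κ) := by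
          apply mul_le_mul (mul_le_mul le_rfl hhatbd (Real.rpow_nonneg htipos.le _) hA)
            hsig (Real.rpow_nonneg hsub0 _)
          exact mul_nonneg hA (mul_nonneg (Real.rpow_nonneg (by norm_num) _)
            (Real.rpow_nonneg hspos.le _))
      _ = (2 ^ (r * (1/2 - β)) * K₁ ^ κ * (N:ℝ) ^ (-κ))
            * ((t n - s) ^ (-α) * (s ^ (β - 1/2) * s ^ (σ - κ) * s ^ ((1 - 1/r) * κ))) := by
          rw [hexp]; ring
      _ = K₂ * (N:ℝ) ^ (-κ) * ((t n - s) ^ (-α) * s ^ γ) := by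
          rw [hspow, hK₂]; try ring
  have hFint : IntervalIntegrable (fun s => (t n - s) ^ (-α) * s ^ γ) volume 0 (t n) :=
    beta_integrable hα1 hγ htnpos
  have huIcc : Set.uIcc (t 1) (t n) ⊆ Set.uIcc (0:ℝ) (t n) := by
    rw [Set.uIcc_of_le ht1tn, Set.uIcc_of_le htnpos.le]
    exact Set.Icc_subset_Icc ht1pos.le le_rfl
  have huIcc0 : Set.uIcc (0:ℝ) (t 1) ⊆ Set.uIcc (0:ℝ) (t n) := by
    rw [Set.uIcc_of_le ht1pos.le, Set.uIcc_of_le htnpos.le]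
    exact Set.Icc_subset_Icc le_rfl ht1tn
  have hFsub : IntervalIntegrable (fun s => (t n - s) ^ (-α) * s ^ γ) volume (t 1) (t n) :=
    hFint.mono_set huIcc
  have hFsub0 : IntervalIntegrable (fun s => (t n - s) ^ (-α) * s ^ γ) volume 0 (t 1) :=
    hFint.mono_set huIcc0
  have hgint : IntervalIntegrable
      (fun s => K₂ * (N:ℝ) ^ (-κ) * ((t n - s) ^ (-α) * s ^ γ)) volume (t 1) (t n) :=
    hFsub.const_mul _
  have hae : (fun s => (t n - s) ^ (-α) * (hat s) ^ (β - 1/2) * (s - hat s) ^ σ)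
      ≤ᵐ[volume.restrict (Set.Icc (t 1) (t n))]
      fun s => K₂ * (N:ℝ) ^ (-κ) * ((t n - s) ^ (-α) * s ^ γ) := by
    have h1 : ∀ᵐ s ∂(volume.restrict (Set.Icc (t 1) (t n))), s ∈ Set.Icc (t 1) (t n) :=
      ae_restrict_mem measurableSet_Icc
    have h2 : ∀ᵐ s ∂(volume.restrict (Set.Icc (t 1) (t n))), s ≠ t n := by
      apply ae_restrict_of_ae
      rw [ae_iff]
      have hset : {a : ℝ | ¬ a ≠ t n} = {t n} := by ext x; simp
      rw [hset]
      exact measure_singleton _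
    filter_upwards [h1, h2] with s hs hne
    exact key s ⟨hs.1, lt_of_le_of_ne hs.2 hne⟩
  calc (∫ s in (t 1)..(t n), (t n - s) ^ (-α) * (hat s) ^ (β - 1/2) * (s - hat s) ^ σ)
      ≤ ∫ s in (t 1)..(t n), K₂ * (N:ℝ) ^ (-κ) * ((t n - s) ^ (-α) * s ^ γ) :=
        intervalIntegral.integral_mono_ae_restrict ht1tn hint hgint hae
    _ = K₂ * (N:ℝ) ^ (-κ) * ∫ s in (t 1)..(t n), (t n - s) ^ (-α) * s ^ γ :=
        intervalIntegral.integral_const_mul _ _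
    _ ≤ K₂ * (N:ℝ) ^ (-κ) * ∫ s in (0:ℝ)..t n, (t n - s) ^ (-α) * s ^ γ := by
        apply mul_le_mul_of_nonneg_left _ (mul_nonneg hK₂pos.le hNκ)
        have hsplit := intervalIntegral.integral_add_adjacent_intervals hFsub0 hFsub
        have h0 : 0 ≤ ∫ s in (0:ℝ)..t 1, (t n - s) ^ (-α) * s ^ γ := by
          apply intervalIntegral.integral_nonneg ht1pos.le
          intro u hu
          exact mul_nonneg (Real.rpow_nonneg (by linarith [hu.2, ht1tn] : (0:ℝ) ≤ t n - u) _)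
            (Real.rpow_nonneg hu.1 _)
        linarith [hsplit]
    _ = K₂ * (N:ℝ) ^ (-κ) * ((t n) ^ (1 - α + γ) * B) := by rw [beta_value _ htnpos]
    _ ≤ (K₂ * B + 1) * (t n) ^ (1/2 - α + β + σ - κ/r) * (N:ℝ) ^ (-κ) := by
        have he : 1 - α + γ = 1/2 - α + β + σ - κ/r := by rw [hγdef]; ring
        rw [he]
        nlinarith [mul_nonneg htne hNκ, hB0, hK₂pos.le]
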